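/- Fix a nonzero p ∈ ℂ and an integer n ≥ 1. The ℂ-linear map from A_L(p) to A_L(np) determined on basis vectors by L_{i,m} ↦ (1/n)·L′_{ni,m} is an injective homomorphism of Lie algebras. -/

import Mathlib

namespace Stmt3

/-- Index set for the basis `{L_{i,m} : i ∈ ℕ, m ∈ ℤ, m ≥ -1}`. -/
def LIdx : Type := {q : ℕ × ℤ // -1 ≤ q.2}

/-- Structure constants of `A_L(p)`: `[L_{i,m}, L_{j,n}] = ((j+p)(m+1) − (i+p)(n+1))·L_{i+j,m+n}`,
where `L_{i+j,m+n}` is read as `0` when `m+n < −1`. -/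
noncomputable def str (p : ℂ) (a b : LIdx) : LIdx →₀ ℂ :=
  if h : -1 ≤ a.1.2 + b.1.2 then
    Finsupp.single ⟨(a.1.1 + b.1.1, a.1.2 + b.1.2), h⟩
      (((b.1.1 : ℂ) + p) * ((a.1.2 : ℂ) + 1) - ((a.1.1 : ℂ) + p) * ((b.1.2 : ℂ) + 1))
  else 0

/-- The Lie bracket of `A_L(p)`: the ℂ-bilinear extension of the structure constants. -/
noncomputable def br (p : ℂ) (x y : LIdx →₀ ℂ) : LIdx →₀ ℂ :=
  x.sum fun a ca => y.sum fun b cb => (ca * cb) • str p a b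

/-- The ℂ-linear map `A_L(p) → A_L(np)` determined on basis vectors by
`L_{i,m} ↦ (1/n)·L′_{ni,m}`. -/
noncomputable def phi (n : ℕ) : (LIdx →₀ ℂ) →ₗ[ℂ] (LIdx →₀ ℂ) :=
  Finsupp.lsum ℂ fun a =>
    LinearMap.toSpanSingleton ℂ (LIdx →₀ ℂ)
      ((n : ℂ)⁻¹ • Finsupp.single (⟨(n * a.1.1, a.1.2), a.2⟩ : LIdx) (1 : ℂ))

/-- The index map `(i,m) ↦ (n·i, m)`. -/
def fmap (n : ℕ) (a : LIdx) : LIdx := ⟨(n * a.1.1, a.1.2), a.2⟩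

lemma fmap_inj {n : ℕ} (hn : 1 ≤ n) : Function.Injective (fmap n) := by
  intro a b h
  have h1 : n * a.1.1 = n * b.1.1 := congrArg (fun x => x.1.1) h
  have h2 : a.1.2 = b.1.2 := congrArg (fun x => x.1.2) h
  have h1' : a.1.1 = b.1.1 := Nat.eq_of_mul_eq_mul_left (by omega) h1
  exact Subtype.ext (Prod.ext h1' h2)

lemma phi_eq (n : ℕ) (x : LIdx →₀ ℂ) :
    phi n x = (n : ℂ)⁻¹ • Finsupp.mapDomain (fmap n) x := by
  classical
  rw [Finsupp.mapDomain, Finsupp.smul_sum]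
  simp only [phi, Finsupp.lsum_apply]
  apply Finsupp.sum_congr
  intro a _
  change x a • ((n : ℂ)⁻¹ • Finsupp.single (fmap n a) (1 : ℂ)) = _
  rw [smul_comm, Finsupp.smul_single, smul_eq_mul, mul_one]

lemma str_f (p : ℂ) (n : ℕ) (a b : LIdx) :
    str ((n : ℂ) * p) (fmap n a) (fmap n b)
      = (n : ℂ) • Finsupp.mapDomain (fmap n) (str p a b) := by
  classical
  by_cases h : -1 ≤ a.1.2 + b.1.2
  · rw [str, str, dif_pos (show -1 ≤ (fmap n a).1.2 + (fmap n b).1.2 from h), dif_pos h]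
    erw [Finsupp.mapDomain_single, Finsupp.smul_single]
    congr 1
    · apply Subtype.ext
      apply Prod.ext
      · show n * a.1.1 + n * b.1.1 = n * (a.1.1 + b.1.1)
        ring
      · rfl
    · simp only [smul_eq_mul, fmap]
      push_cast
      ring
  · rw [str, str, dif_neg (show ¬ -1 ≤ (fmap n a).1.2 + (fmap n b).1.2 from h), dif_neg h,
      Finsupp.mapDomain_zero, smul_zero]

theorem phi_injective_lieHom (p : ℂ) (hp : p ≠ 0) (n : ℕ) (hn : 1 ≤ n) :
    Function.Injective (phi n) ∧
    (∀ x y : LIdx →₀ ℂ, phi n (br p x y) = br ((n : ℂ) * p) (phi n x) (phi n y)) := by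
  have hn0 : (n : ℂ) ≠ 0 := Nat.cast_ne_zero.2 (by omega)
  constructor
  · intro x y hxy
    rw [phi_eq, phi_eq] at hxy
    have h2 := smul_right_injective (LIdx →₀ ℂ) (inv_ne_zero hn0) hxy
    exact Finsupp.mapDomain_injective (fmap_inj hn) h2
  · intro x y
    classical
    rw [br, map_finsuppSum, phi_eq n x, phi_eq n y, br,
        Finsupp.sum_smul_index (fun i => by simp),
        Finsupp.sum_mapDomain_index_inj (fmap_inj hn)]
    apply Finsupp.sum_congr
    intro a _
    rw [map_finsuppSum,
        Finsupp.sum_smul_index (fun i => by simp),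
        Finsupp.sum_mapDomain_index_inj (fmap_inj hn)]
    apply Finsupp.sum_congr
    intro b _
    rw [map_smul, phi_eq, str_f, smul_smul, smul_smul]
    congr 1
    field_simp

end Stmt3
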